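/- For the ℕ²-gradation of the span of decorated planar rooted trees by (number of vertices, fertility of the root), the root-grafting permutative product ⋆ satisfies: Br(𝒟)(i,j) ⋆ Br(𝒟)(k,l) ⊆ Br(𝒟)(i+k, l+1), and for trees t₁ of bidegree (i,j) and t₂ of bidegree (k,l), the difference ⟨t₁; t₂⟩ − t₁ ⋆ t₂ lies in Br(𝒟)(i+k, l) (same root fertility). -/

import Mathlib

/-- Planar rooted trees decorated by `D`. -/
inductive PTree (D : Type*) : Type _
  | node : D → List (PTree D) → PTree D

mutual
  /-- Number of vertices of a tree. -/
  def size {D : Type*} : PTree D → ℕ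
    | .node _ l => 1 + sizeL l
  def sizeL {D : Type*} : List (PTree D) → ℕ
    | [] => 0
    | s :: rest => size s + sizeL rest
end

/-- Fertility of the root: number of children of the root. -/
def fert {D : Type*} : PTree D → ℕ
  | .node _ l => l.length

/-- `t ⋆ t'`: grafting of `t` on the root of `t'` in all possible planar positions. -/
noncomputable def starB {D : Type*} (t : PTree D) : PTree D → (PTree D →₀ ℤ)
  | .node d l =>
      ((List.range (l.length + 1)).map fun i =>
        Finsupp.single (PTree.node d (l.insertIdx i t)) (1 : ℤ)).sum

mutual
  /-- The brace/pre-Lie product `⟨t; t'⟩`: the sum of all graftings of `t` on all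
  vertices of `t'`, in all planar positions. -/
  noncomputable def brace {D : Type*} (t : PTree D) : PTree D → (PTree D →₀ ℤ)
    | .node d l =>
        starB t (.node d l) +
          (braceL t l).sum fun l' c => c • Finsupp.single (PTree.node d l') (1 : ℤ)

  noncomputable def braceL {D : Type*} (t : PTree D) :
      List (PTree D) → (List (PTree D) →₀ ℤ)
    | [] => 0
    | s :: rest =>
        ((brace t s).sum fun r c => c • Finsupp.single (r :: rest) (1 : ℤ)) +
          ((braceL t rest).sum fun l' c => c • Finsupp.single (s :: l') (1 : ℤ))
end

lemma sizeL_insertIdx {D : Type*} (t : PTree D) :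
    ∀ (l : List (PTree D)) (n : ℕ), n ≤ l.length →
      sizeL (l.insertIdx n t) = size t + sizeL l
  | l, 0, _ => by cases l <;> simp [List.insertIdx, sizeL]
  | [], n + 1, h => by simp at h
  | s :: rest, n + 1, h => by
      have h2 := sizeL_insertIdx t rest n (by simpa using h)
      show sizeL (s :: rest.insertIdx n t) = _
      simp [sizeL, h2]; omega

lemma mem_support_listsum {α β M : Type*} [AddCommMonoid M] (g : α → (β →₀ M)) :
    ∀ (xs : List α), ∀ s ∈ ((xs.map g).sum).support, ∃ x ∈ xs, s ∈ (g x).support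
  | [], s, hs => by simp at hs
  | x :: xs, s, hs => by
      classical
      simp only [List.map_cons, List.sum_cons] at hs
      rcases Finset.mem_union.1 (Finsupp.support_add hs) with h | h
      · exact ⟨x, by simp, h⟩
      · obtain ⟨y, hy, hy2⟩ := mem_support_listsum g xs s h
        exact ⟨y, by simp [hy], hy2⟩

lemma mem_support_sum_single {β M : Type*} (f : β →₀ ℤ) (h : β → M)
    (s : M) (hs : s ∈ (f.sum fun r c => c • Finsupp.single (h r) (1 : ℤ)).support) :
    ∃ r ∈ f.support, s = h r := by
  classical
  have := Finsupp.support_sum hs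
  obtain ⟨r, hr, hmem⟩ := Finset.mem_biUnion.1 this
  have : s ∈ (Finsupp.single (h r) (1 : ℤ)).support :=
    Finsupp.support_smul hmem
  have := Finsupp.support_single_subset this
  exact ⟨r, hr, by simpa using this⟩

lemma starB_supp {D : Type*} (t : PTree D) : ∀ (t₂ : PTree D),
    ∀ s ∈ (starB t t₂).support, size s = size t + size t₂ ∧ fert s = fert t₂ + 1
  | .node d l, s, hs => by
      obtain ⟨n, hn, hmem⟩ := mem_support_listsum _ _ s hs
      have hn' : n ≤ l.length := by
        have := List.mem_range.1 hn; omega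
      have hseq : s = PTree.node d (l.insertIdx n t) := by
        simpa using Finsupp.support_single_subset hmem
      subst hseq
      constructor
      · simp [size, sizeL_insertIdx t l n hn']; omega
      · simp [fert, List.length_insertIdx, hn']

mutual
theorem brace_supp {D : Type*} (t : PTree D) : ∀ (t₂ : PTree D),
    ∀ s ∈ (brace t t₂).support, size s = size t + size t₂
  | .node d l, s, hs => by
      classical
      rw [brace] at hs
      rcases Finset.mem_union.1 (Finsupp.support_add hs) with h | h
      · exact (starB_supp t _ s h).1
      · obtain ⟨l', hl', rfl⟩ := mem_support_sum_single _ _ s h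
        have := (braceL_supp t l l' hl').1
        simp [size, this]; omega
theorem braceL_supp {D : Type*} (t : PTree D) : ∀ (l : List (PTree D)),
    ∀ l' ∈ (braceL t l).support, sizeL l' = size t + sizeL l ∧ l'.length = l.length
  | [], l', h => by rw [braceL] at h; simp at h
  | s :: rest, l', h => by
      classical
      rw [braceL] at h
      rcases Finset.mem_union.1 (Finsupp.support_add h) with h | h
      · obtain ⟨r, hr, rfl⟩ := mem_support_sum_single _ _ l' h
        have := brace_supp t s r hr
        simp [sizeL, this]; omega
      · obtain ⟨l'', hl'', rfl⟩ := mem_support_sum_single _ _ l' h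
        have := braceL_supp t rest l'' hl''
        simp [sizeL, this.1, this.2]; omega
end

/-- For the `ℕ²`-gradation of `Br(𝒟)` by (number of vertices, fertility of the root):
`Br(𝒟)(i,j) ⋆ Br(𝒟)(k,l) ⊆ Br(𝒟)(i+k, l+1)`, and
`⟨t₁; t₂⟩ − t₁ ⋆ t₂ ∈ Br(𝒟)(i+k, l)`. -/
theorem bigraded_star_brace {D : Type*} (t₁ t₂ : PTree D) (i j k l : ℕ)
    (h₁ : size t₁ = i ∧ fert t₁ = j) (h₂ : size t₂ = k ∧ fert t₂ = l) :
    (∀ s ∈ (starB t₁ t₂).support, size s = i + k ∧ fert s = l + 1) ∧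
    (∀ s ∈ (brace t₁ t₂ - starB t₁ t₂).support, size s = i + k ∧ fert s = l) := by
  obtain ⟨rfl, rfl⟩ := h₁
  obtain ⟨rfl, rfl⟩ := h₂
  refine ⟨fun s hs => starB_supp t₁ t₂ s hs, ?_⟩
  obtain ⟨d, L⟩ := t₂
  intro s hs
  rw [brace, add_sub_cancel_left] at hs
  obtain ⟨l', hl', rfl⟩ := mem_support_sum_single _ _ s hs
  obtain ⟨h1, h2⟩ := braceL_supp t₁ L l' hl'
  constructor
  · simp [size, h1]; omega
  · simp [fert, h2]
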